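/- Let G be an acyclic transitive digraph on a finite vertex set V and let S be a locally maximal 2-dimensional subgraph of G, i.e., a 2-dimensional subgraph of G that is not strictly contained in any 2-dimensional subgraph of G. Then there exists an orientation H of the complement of G such that S = G \ ucl(tcl(H)). -/

import Mathlib

/-- Undirected closure of a digraph: `E ∪ E⁻¹`. -/
def ucl {V : Type*} (E : V → V → Prop) : V → V → Prop := fun a b => E a b ∨ E b a

/-- Complement of a digraph: all pairs of distinct vertices not in `ucl E`. -/
def cmpl {V : Type*} (E : V → V → Prop) : V → V → Prop := fun a b => a ≠ b ∧ ¬ ucl E a b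

/-- A digraph is oriented iff `E ∩ E⁻¹ = ∅`. -/
def Oriented {V : Type*} (E : V → V → Prop) : Prop := ∀ a b, E a b → ¬ E b a

/-- `O` is an orientation of `E`: a maximal oriented subset of `E`. -/
def IsOrientation {V : Type*} (O E : V → V → Prop) : Prop :=
  (∀ a b, O a b → E a b) ∧ Oriented O ∧
    ∀ O' : V → V → Prop, (∀ a b, O' a b → E a b) → Oriented O' →
      (∀ a b, O a b → O' a b) → ∀ a b, O' a b → O a b

/-- Transitivity of a digraph: `(a,b) ∈ E`, `(b,c) ∈ E` and `a ≠ c` imply `(a,c) ∈ E`. -/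
def TransD {V : Type*} (E : V → V → Prop) : Prop :=
  ∀ a b c, E a b → E b c → a ≠ c → E a c

/-- Transitive closure of a digraph. -/
def tcl {V : Type*} (E : V → V → Prop) : V → V → Prop := Relation.TransGen E

/-- A digraph is acyclic iff its transitive closure is irreflexive. -/
def Acyclic {V : Type*} (E : V → V → Prop) : Prop := Irreflexive (tcl E)

/-- A transitive orientation of `E` is an orientation of `E` that is transitive. -/
def IsTransOrientation {V : Type*} (O E : V → V → Prop) : Prop :=
  IsOrientation O E ∧ TransD O

/-- `E` is transitively orientable iff it has a transitive orientation. -/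
def TransOrientable {V : Type*} (E : V → V → Prop) : Prop := ∃ O, IsTransOrientation O E

/-- `L` is a strict linear order on the vertex set. -/
def IsStrictLinear {V : Type*} (L : V → V → Prop) : Prop :=
  Irreflexive L ∧ Transitive L ∧ ∀ a b : V, a ≠ b → L a b ∨ L b a

/-- `E` is 2-dimensional: the intersection of two strict linear orders. -/
def TwoDim {V : Type*} (E : V → V → Prop) : Prop :=
  ∃ L₁ L₂ : V → V → Prop, IsStrictLinear L₁ ∧ IsStrictLinear L₂ ∧
    ∀ a b, E a b ↔ L₁ a b ∧ L₂ a b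

/-- Direct forcing `Γ` between edges of an undirected graph `E`:
`(a,b) Γ (c,d)` iff both are edges of `E` and either `a = c` with `b, d` non-adjacent,
or `b = d` with `a, c` non-adjacent. -/
def Forces {V : Type*} (E : V → V → Prop) (e f : V × V) : Prop :=
  E e.1 e.2 ∧ E f.1 f.2 ∧
    ((e.1 = f.1 ∧ e.2 ≠ f.2 ∧ ¬ E e.2 f.2) ∨ (e.2 = f.2 ∧ e.1 ≠ f.1 ∧ ¬ E e.1 f.1))

/-- `S` is a 2-dimensional subgraph of `G`: a subgraph that is a 2-dimensional
acyclic transitive digraph. -/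
def TwoDimSubgraph {V : Type*} (G S : V → V → Prop) : Prop :=
  (∀ a b, S a b → G a b) ∧ Irreflexive S ∧ TransD S ∧ Acyclic S ∧ TwoDim S

/-- A permutation graph: an undirected graph such that both it and its complement
are transitively orientable. -/
def PermGraph {V : Type*} (E : V → V → Prop) : Prop :=
  Irreflexive E ∧ (∀ a b, E a b → E b a) ∧ TransOrientable E ∧ TransOrientable (cmpl E)

/-- `S` is a permutation subgraph of `G`: an undirected subgraph of `G` that is a
permutation graph. -/
def PermSubgraph {V : Type*} (G S : V → V → Prop) : Prop :=
  (∀ a b, S a b → G a b) ∧ PermGraph S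

theorem maximal_two_dimensional_subgraph_is_induced
    {V : Type*} [Fintype V] (G S : V → V → Prop)
    (hirr : Irreflexive G) (hacyc : Acyclic G) (htrans : TransD G)
    (hS : TwoDimSubgraph G S)
    (hmax : ∀ S' : V → V → Prop, TwoDimSubgraph G S' →
      (∀ a b, S a b → S' a b) → ∀ a b, S' a b → S a b) :
    ∃ H : V → V → Prop, IsOrientation H (cmpl G) ∧
      ∀ a b, S a b ↔ G a b ∧ ¬ ucl (tcl H) a b := by
  obtain ⟨hSG, hSirr, hStd, hSacyc, L₁, L₂, ⟨hL₁i, hL₁t, hL₁tot⟩, ⟨hL₂i, hL₂t, hL₂tot⟩, hSL⟩ := hS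
  have hGasym : ∀ a b, G a b → G b a → False := fun a b h1 h2 =>
    hacyc a (Relation.TransGen.head h1 (Relation.TransGen.single h2))
  set H : V → V → Prop := fun a b => cmpl G a b ∧ L₁ a b with hHdef
  set Q : V → V → Prop := tcl H with hQdef
  have hQtrans : ∀ a b c, Q a b → Q b c → Q a c := fun a b c h1 h2 => h1.trans h2
  have hQL1 : ∀ a b, Q a b → L₁ a b := by
    intro a b h
    induction h with
    | single h => exact h.2
    | tail _ h ih => exact hL₁t ih h.2
  have hHL2 : ∀ a b, H a b → L₂ b a := by
    intro a b h
    have hne : a ≠ b := h.1.1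
    have hnS : ¬ S a b := fun hs => h.1.2 (Or.inl (hSG a b hs))
    have hnL2 : ¬ L₂ a b := fun h2 => hnS ((hSL a b).2 ⟨h.2, h2⟩)
    exact (hL₂tot a b hne).resolve_left hnL2
  have hQL2 : ∀ a b, Q a b → L₂ b a := by
    intro a b h
    induction h with
    | single h => exact hHL2 _ _ h
    | tail _ h ih => exact hL₂t (hHL2 _ _ h) ih
  have hQne : ∀ a b, Q a b → a ≠ b := by
    intro a b h hab
    exact hL₁i a (hab ▸ hQL1 a b h)
  set T : V → V → Prop := fun a b => G a b ∧ ¬ ucl Q a b with hTdef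
  -- cover: every pair of distinct vertices is in ucl T or ucl Q
  have hcover : ∀ a b, a ≠ b → T a b ∨ T b a ∨ Q a b ∨ Q b a := by
    intro a b hne
    by_cases hq : Q a b
    · exact Or.inr (Or.inr (Or.inl hq))
    by_cases hq' : Q b a
    · exact Or.inr (Or.inr (Or.inr hq'))
    by_cases hg : G a b
    · exact Or.inl ⟨hg, fun h => h.elim hq hq'⟩
    by_cases hg' : G b a
    · exact Or.inr (Or.inl ⟨hg', fun h => h.elim hq' hq⟩)
    rcases hL₁tot a b hne with h1 | h1
    · exact absurd (Relation.TransGen.single ⟨⟨hne, fun h => h.elim hg hg'⟩, h1⟩) hq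
    · exact absurd (Relation.TransGen.single ⟨⟨hne.symm, fun h => h.elim hg' hg⟩, h1⟩) hq'
  -- key lemma 1 : no T a b, T b c, Q a c
  have key1 : ∀ b c, T b c → ∀ a, Q a c → T a b → False := by
    intro b c hTbc a hQ
    induction hQ using Relation.TransGen.head_induction_on with
    | single h =>
      rename_i x
      intro hTab
      exact h.1.2 (Or.inl (htrans x b c hTab.1 hTbc.1 h.1.1))
    | head h' hQyc ih =>
      rename_i x y
      intro hTab
      have hby : b ≠ y := by
        intro hby
        exact h'.1.2 (Or.inl (hby ▸ hTab.1))
      rcases hcover b y hby with hT | hT | hq | hq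
      · exact h'.1.2 (Or.inl (htrans x b y hTab.1 hT.1 h'.1.1))
      · exact ih hT
      · exact hTbc.2 (Or.inl (hQtrans b y c hq hQyc))
      · exact hTab.2 (Or.inl (Relation.TransGen.head h' hq))
  -- key lemma 2 : no T a b, T b c, Q c a
  have key2 : ∀ a b, T a b → ∀ c, Q c a → T b c → False := by
    intro a b hTab c hQ
    induction hQ using Relation.TransGen.head_induction_on with
    | single h =>
      rename_i x
      intro hTbc
      exact h.1.2 (Or.inr (htrans a b x hTab.1 hTbc.1 h.1.1.symm))
    | head h' hQya ih =>
      rename_i x y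
      intro hTbc
      have hby : b ≠ y := by
        intro hby
        exact h'.1.2 (Or.inr (hby ▸ hTbc.1))
      rcases hcover b y hby with hT | hT | hq | hq
      · exact ih hT
      · exact h'.1.2 (Or.inr (htrans y b x hT.1 hTbc.1 (fun h => h'.1.1 h.symm)))
      · exact hTab.2 (Or.inr (hQtrans b y a hq hQya))
      · exact hTbc.2 (Or.inr (Relation.TransGen.head h' hq))
  -- T is transitive
  have hTG : ∀ a b, T a b → G a b := fun a b h => h.1
  have hTtrans : ∀ a b c, T a b → T b c → T a c := by
    intro a b c hTab hTbc
    have hac : a ≠ c := by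
      intro h
      exact hGasym a b hTab.1 (h ▸ hTbc.1)
    refine ⟨htrans a b c hTab.1 hTbc.1 hac, fun h => ?_⟩
    rcases h with h | h
    · exact key1 b c hTbc a h hTab
    · exact key2 a b hTab c h hTbc
  have hTirr : ∀ a, ¬ T a a := fun a h => hirr a h.1
  -- the two linear orders
  set M₁ : V → V → Prop := fun a b => T a b ∨ Q a b with hM₁def
  set M₂ : V → V → Prop := fun a b => T a b ∨ Q b a with hM₂def
  have hM₁lin : IsStrictLinear M₁ := by
    refine ⟨fun a h => ?_, ?_, ?_⟩
    · rcases h with h | h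
      · exact hTirr a h
      · exact hQne a a h rfl
    · rintro a b c (h1 | h1) (h2 | h2)
      · exact Or.inl (hTtrans a b c h1 h2)
      · -- T a b, Q b c
        have hac : a ≠ c := by
          intro h; subst h
          exact h1.2 (Or.inr h2)
        rcases hcover a c hac with hT | hT | hq | hq
        · exact Or.inl hT
        · exact absurd (Or.inr h2) (hTtrans c a b hT h1).2
        · exact Or.inr hq
        · exact absurd (Or.inr (hQtrans b c a h2 hq)) h1.2
      · -- Q a b, T b c
        have hac : a ≠ c := by
          intro h; subst h
          exact h2.2 (Or.inr h1)
        rcases hcover a c hac with hT | hT | hq | hq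
        · exact Or.inl hT
        · exact absurd (Or.inr h1) (hTtrans b c a h2 hT).2
        · exact Or.inr hq
        · exact absurd (Or.inr (hQtrans c a b hq h1)) h2.2
      · exact Or.inr (hQtrans a b c h1 h2)
    · intro a b hne
      rcases hcover a b hne with h | h | h | h
      · exact Or.inl (Or.inl h)
      · exact Or.inr (Or.inl h)
      · exact Or.inl (Or.inr h)
      · exact Or.inr (Or.inr h)
  have hM₂lin : IsStrictLinear M₂ := by
    refine ⟨fun a h => ?_, ?_, ?_⟩
    · rcases h with h | h
      · exact hTirr a h
      · exact hQne a a h rfl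
    · rintro a b c (h1 | h1) (h2 | h2)
      · exact Or.inl (hTtrans a b c h1 h2)
      · -- T a b, Q c b
        have hac : a ≠ c := by
          intro h; subst h
          exact h1.2 (Or.inl h2)
        rcases hcover a c hac with hT | hT | hq | hq
        · exact Or.inl hT
        · exact absurd (Or.inl h2) (hTtrans c a b hT h1).2
        · exact absurd (Or.inl (hQtrans a c b hq h2)) h1.2
        · exact Or.inr hq
      · -- Q b a, T b c
        have hac : a ≠ c := by
          intro h; subst h
          exact h2.2 (Or.inl h1)
        rcases hcover a c hac with hT | hT | hq | hq
        · exact Or.inl hT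
        · exact absurd (Or.inl h1) (hTtrans b c a h2 hT).2
        · exact absurd (Or.inl (hQtrans b a c h1 hq)) h2.2
        · exact Or.inr hq
      · exact Or.inr (hQtrans c b a h2 h1)
    · intro a b hne
      rcases hcover a b hne with h | h | h | h
      · exact Or.inl (Or.inl h)
      · exact Or.inr (Or.inl h)
      · exact Or.inr (Or.inr h)
      · exact Or.inl (Or.inr h)
  have hQasym : ∀ a b, Q a b → Q b a → False := fun a b h1 h2 =>
    hL₁i a (hL₁t (hQL1 a b h1) (hQL1 b a h2))
  have hTM : ∀ a b, T a b ↔ M₁ a b ∧ M₂ a b := by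
    intro a b
    constructor
    · intro h; exact ⟨Or.inl h, Or.inl h⟩
    · rintro ⟨h1 | h1, h2 | h2⟩
      · exact h1
      · exact h1
      · exact h2
      · exact absurd h2 (fun h => hQasym a b h1 h)
  -- T is a two-dimensional subgraph of G
  have hTsub : TwoDimSubgraph G T := by
    refine ⟨hTG, hTirr, fun a b c h1 h2 _ => hTtrans a b c h1 h2, ?_, M₁, M₂, hM₁lin, hM₂lin, hTM⟩
    have htclT : ∀ a b, Relation.TransGen T a b → T a b := by
      intro a b h
      induction h with
      | single h => exact h
      | tail _ h ih => exact hTtrans _ _ _ ih h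
    exact fun a hT => hTirr a (htclT a a hT)
  -- S ⊆ T
  have hST : ∀ a b, S a b → T a b := by
    intro a b hs
    obtain ⟨h1, h2⟩ := (hSL a b).1 hs
    refine ⟨hSG a b hs, fun h => ?_⟩
    rcases h with h | h
    · exact hL₂i a (hL₂t h2 (hQL2 a b h))
    · exact hL₁i a (hL₁t h1 (hQL1 b a h))
  have hTeqS : ∀ a b, S a b ↔ T a b :=
    fun a b => ⟨hST a b, hmax T hTsub hST a b⟩
  refine ⟨H, ⟨fun a b h => h.1, fun a b h hba => hL₁i a (hL₁t h.2 hba.2), ?_⟩, ?_⟩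
  · intro O' hsub hor hext a b hO'
    have hc : cmpl G a b := hsub a b hO'
    rcases hL₁tot a b hc.1 with h1 | h1
    · exact ⟨hc, h1⟩
    · have hc' : cmpl G b a := ⟨hc.1.symm, fun h => hc.2 (h.elim Or.inr Or.inl)⟩
      exact absurd (hext b a ⟨hc', h1⟩) (fun hh => hor a b hO' hh)
  · intro a b
    exact (hTeqS a b).trans Iff.rfl
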